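/- Let $r_i, r_j, r_k, r_l > 0$ with $r_i = \min\{r_i, r_j, r_k, r_l\}$ and $Q^{\mathbb{E}}_{ijkl} = 0$. Then $\frac{\partial Q^{\mathbb{E}}_{ijkl}}{\partial r_i} = -\frac{2}{r_i^2}\left(\frac{1}{r_j}+\frac{1}{r_k}+\frac{1}{r_l}-\frac{1}{r_i}\right) > 0$. -/

import Mathlib

theorem stmt_2 (ri rj rk rl : ℝ) (hi : 0 < ri) (hj : 0 < rj) (hk : 0 < rk) (hl : 0 < rl)
    (hmin : ri ≤ rj ∧ ri ≤ rk ∧ ri ≤ rl)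
    (hQ : (1/ri + 1/rj + 1/rk + 1/rl)^2 - 2*(1/ri^2 + 1/rj^2 + 1/rk^2 + 1/rl^2) = 0) :
    deriv (fun x : ℝ => (1/x + 1/rj + 1/rk + 1/rl)^2 - 2*(1/x^2 + 1/rj^2 + 1/rk^2 + 1/rl^2)) ri
      = -(2/ri^2) * (1/rj + 1/rk + 1/rl - 1/ri)
    ∧ 0 < -(2/ri^2) * (1/rj + 1/rk + 1/rl - 1/ri) := by
  obtain ⟨h1, h2, h3⟩ := hmin
  have hine : ri ≠ 0 := hi.ne'
  constructor
  · have hinv : HasDerivAt (fun x : ℝ => 1/x) (-(ri^2)⁻¹) ri := by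
      simpa [one_div] using hasDerivAt_inv hine
    have hinv2 : HasDerivAt (fun x : ℝ => 1/x^2) (-(2 * ri ^ 1) / (ri^2)^2) ri := by
      simpa [one_div] using (hasDerivAt_pow 2 ri).fun_inv (pow_ne_zero 2 hine)
    have hA : HasDerivAt (fun x : ℝ => (1/x + 1/rj + 1/rk + 1/rl)^2)
        (2 * (1/ri + 1/rj + 1/rk + 1/rl) ^ 1 * (-(ri^2)⁻¹)) ri :=
      (((hinv.add_const (1/rj)).add_const (1/rk)).add_const (1/rl)).pow 2
    have hB : HasDerivAt (fun x : ℝ => 2*(1/x^2 + 1/rj^2 + 1/rk^2 + 1/rl^2))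
        (2 * (-(2 * ri ^ 1) / (ri^2)^2)) ri :=
      (((hinv2.add_const (1/rj^2)).add_const (1/rk^2)).add_const (1/rl^2)).const_mul 2
    rw [(hA.fun_sub hB).deriv]
    field_simp
    ring
  · have hb : 1/rj ≤ 1/ri := one_div_le_one_div_of_le hi h1
    have hc : 1/rk ≤ 1/ri := one_div_le_one_div_of_le hi h2
    have hd : 1/rl ≤ 1/ri := one_div_le_one_div_of_le hi h3
    set a := 1/ri with ha
    set b := 1/rj with hbdef
    set c := 1/rk with hcdef
    set d := 1/rl with hddef
    have hbp : 0 < b := by positivity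
    have hcp : 0 < c := by positivity
    have hdp : 0 < d := by positivity
    have hap : 0 < a := by positivity
    have hQ' : (a + b + c + d)^2 = 2*(a^2 + b^2 + c^2 + d^2) := by
      have h2 : 1/ri^2 = a^2 := by rw [ha]; ring
      have h3' : 1/rj^2 = b^2 := by rw [hbdef]; ring
      have h4 : 1/rk^2 = c^2 := by rw [hcdef]; ring
      have h5 : 1/rl^2 = d^2 := by rw [hddef]; ring
      rw [h2, h3', h4, h5] at hQ
      linarith
    have key : b + c + d < a := by
      by_contra h
      push_neg at h
      have ht : 0 ≤ b + c + d - a := by linarith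
      have hle : b + c + d - a ≤ c + d := by linarith
      have hsq : (b + c + d - a)^2 ≤ (c + d)^2 := by nlinarith [add_pos hcp hdp]
      nlinarith [mul_pos hbp (add_pos hcp hdp), mul_pos hcp hdp, sq_nonneg (c - d)]
    have hpos : 0 < 2/ri^2 := by positivity
    have heq : -(2/ri^2) * (b + c + d - a) = (2/ri^2) * (a - (b + c + d)) := by ring
    calc (0:ℝ) < (2/ri^2) * (a - (b + c + d)) := mul_pos hpos (by linarith)
      _ = -(2/ri^2) * (b + c + d - a) := heq.symm
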